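/- arXiv:2006.00265 — 5 statements merged into one kernel-verified Lean document; each statement's English description precedes it below -/
import Mathlib

section
/- Let H be a real inner product space, f ∈ H, and λ ≥ 0. Then 0 minimizes the map g ↦ ‖f − g‖² + 2λ‖g‖ over H (i.e., ‖f‖² ≤ ‖f − g‖² + 2λ‖g‖ for all g ∈ H) if and only if ‖f‖ ≤ λ. -/
/-- In a real inner product space, `0` minimizes `g ↦ ‖f - g‖² + 2λ‖g‖`
if and only if `‖f‖ ≤ λ`. -/
theorem zero_minimizes_iff_norm_le {H : Type*} [NormedAddCommGroup H]
    [InnerProductSpace ℝ H] (f : H) (lam : ℝ) (hlam : 0 ≤ lam) :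
    (∀ g : H, ‖f‖ ^ 2 ≤ ‖f - g‖ ^ 2 + 2 * lam * ‖g‖) ↔ ‖f‖ ≤ lam := by
  constructor
  · intro h
    by_contra hc
    push_neg at hc
    have hf : 0 < ‖f‖ := lt_of_le_of_lt hlam hc
    set t : ℝ := (‖f‖ - lam) / ‖f‖ with ht
    have ht0 : 0 < t := div_pos (by linarith) hf
    have ht1 : t ≤ 1 := by
      rw [div_le_one hf]; linarith
    have hg := h (t • f)
    have h1 : ‖t • f‖ = t * ‖f‖ := by
      rw [norm_smul, Real.norm_eq_abs, abs_of_pos ht0]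
    have h2 : ‖f - t • f‖ = (1 - t) * ‖f‖ := by
      have : f - t • f = (1 - t) • f := by
        rw [sub_smul, one_smul]
      rw [this, norm_smul, Real.norm_eq_abs, abs_of_nonneg (by linarith)]
    rw [h1, h2] at hg
    have htf : t * ‖f‖ = ‖f‖ - lam := by
      rw [ht, div_mul_cancel₀ _ hf.ne']
    nlinarith [sq_nonneg (‖f‖ - lam)]
  · intro h g
    have hcs := real_inner_le_norm f g
    have hexp : ‖f - g‖ ^ 2 = ‖f‖ ^ 2 - 2 * inner ℝ f g + ‖g‖ ^ 2 := by
      exact norm_sub_sq_real f g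
    nlinarith [norm_nonneg g, sq_nonneg ‖g‖, mul_le_mul_of_nonneg_right h (norm_nonneg g)]
end

section
/- Let H be a real Hilbert space, K a closed linear subspace of H, R ∈ H, and λ ≥ 0. Let f := P_K(R) be the orthogonal projection of R onto K, and set g* := S_λ(f) = (1 − λ/‖f‖)₊ · f. Then g* ∈ K and for every g ∈ K one has ‖R − g*‖² + 2λ‖g*‖ ≤ ‖R − g‖² + 2λ‖g‖; that is, g* minimizes g ↦ ‖R − g‖² + 2λ‖g‖ over K. -/
open Submodule

/-- Soft-thresholding of `f` at level `λ` in a real normed space: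
`S_λ(f) = (1 - λ/‖f‖)₊ • f` (equal to `0` whenever `‖f‖ ≤ λ`, in particular when `f = 0`). -/
noncomputable def softThreshold {H : Type*} [NormedAddCommGroup H] [Module ℝ H]
    (lam : ℝ) (f : H) : H :=
  (max (1 - lam / ‖f‖) 0) • f

/-- Let `K` be a closed subspace of a real Hilbert space `H`, `R ∈ H`, `λ ≥ 0`, and
`f := P_K R` the orthogonal projection of `R` onto `K`. Then `g* := S_λ(f)` belongs to `K`
and minimizes `g ↦ ‖R - g‖² + 2λ‖g‖` over `K`. -/
theorem softThreshold_of_orthogonalProjection_minimizes {H : Type*} [NormedAddCommGroup H]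
    [InnerProductSpace ℝ H] [CompleteSpace H] (K : Submodule ℝ H)
    (hK : IsClosed (K : Set H)) (R : H) (lam : ℝ) (hlam : 0 ≤ lam) :
    letI : CompleteSpace K := hK.completeSpace_coe
    let f : H := (orthogonalProjection K R : H)
    softThreshold lam f ∈ K ∧
      ∀ g ∈ K, ‖R - softThreshold lam f‖ ^ 2 + 2 * lam * ‖softThreshold lam f‖ ≤
        ‖R - g‖ ^ 2 + 2 * lam * ‖g‖ := by
  letI : CompleteSpace K := hK.completeSpace_coe
  intro f
  have hfK : f ∈ K := (orthogonalProjection K R).2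
  set t : ℝ := max (1 - lam / ‖f‖) 0 with ht
  have ht0 : 0 ≤ t := le_max_right _ _
  have ht1 : t ≤ 1 := by
    apply max_le _ zero_le_one
    have : 0 ≤ lam / ‖f‖ := div_nonneg hlam (norm_nonneg f)
    linarith
  have hst : softThreshold lam f = t • f := rfl
  have hmem : softThreshold lam f ∈ K := by rw [hst]; exact K.smul_mem t hfK
  refine ⟨hmem, ?_⟩
  intro g hg
  have horth : R - f ∈ Kᗮ := K.sub_starProjection_mem_orthogonal R
  have pyth : ∀ h : H, h ∈ K → ‖R - h‖ ^ 2 = ‖R - f‖ ^ 2 + ‖f - h‖ ^ 2 := by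
    intro h hh
    have hinner : inner ℝ (R - f) (f - h) = (0:ℝ) := by
      have := horth _ (K.sub_mem hfK hh)
      rwa [real_inner_comm] at this
    have hE : R - h = (R - f) + (f - h) := by abel
    rw [hE, @norm_add_sq_real, hinner]; ring
  rw [pyth _ hmem, pyth _ hg]
  have key : ‖f - softThreshold lam f‖ ^ 2 + 2 * lam * ‖softThreshold lam f‖ ≤
      ‖f - g‖ ^ 2 + 2 * lam * ‖g‖ := by
    have hnorm1 : ‖softThreshold lam f‖ = t * ‖f‖ := by
      rw [hst, norm_smul, Real.norm_eq_abs, abs_of_nonneg ht0]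
    have hnorm2 : ‖f - softThreshold lam f‖ = (1 - t) * ‖f‖ := by
      have : f - softThreshold lam f = (1 - t) • f := by
        rw [hst, sub_smul, one_smul]
      rw [this, norm_smul, Real.norm_eq_abs, abs_of_nonneg (by linarith)]
    rw [hnorm1, hnorm2]
    set a : ℝ := ‖f‖ with ha
    set s : ℝ := ‖g‖ with hs
    set b : ℝ := ‖f - g‖ with hb
    have ha0 : 0 ≤ a := norm_nonneg f
    have hs0 : 0 ≤ s := norm_nonneg g
    have hb1 : a - s ≤ b := by
      have := norm_sub_norm_le f g; simpa using this
    have hb2 : s - a ≤ b := by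
      have := norm_sub_norm_le g f
      rw [norm_sub_rev] at this; simpa using this
    have hbsq : (a - s) ^ 2 ≤ b ^ 2 := sq_le_sq' (by linarith) hb1
    rcases eq_or_lt_of_le ha0 with hA | hA
    · -- a = 0 : f = 0, LHS = 0
      have haz : a = 0 := hA.symm
      rw [haz]
      nlinarith [sq_nonneg b, mul_nonneg hlam hs0]
    · rcases le_or_gt a lam with hcase | hcase
      · -- lam ≥ a : t = 0
        have h1 : 1 ≤ lam / a := (one_le_div hA).mpr hcase
        have htz : t = 0 := by
          rw [ht]; exact max_eq_right (by linarith)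
        rw [htz]
        nlinarith [mul_nonneg hs0 (sub_nonneg.mpr hcase), mul_nonneg hs0 hs0]
      · -- lam < a : t = 1 - lam/a
        have htv : t = 1 - lam / a := by
          rw [ht]
          apply max_eq_left
          have : lam / a < 1 := (div_lt_one hA).mpr hcase
          linarith
        have hta : t * a = a - lam := by
          rw [htv]; field_simp
        have h1ta : (1 - t) * a = lam := by
          have : (1 - t) * a = a - t * a := by ring
          rw [this, hta]; ring
        rw [hta, h1ta]
        nlinarith [sq_nonneg (a - lam - s)]
  linarith
end

section
/- Let m₁ ≤ m₂ be sub-σ-algebras of 𝒢 and Y ∈ L²(P). Suppose E[Y | m₂] = μ + G a.e., where μ ∈ L²(P) is a.e. equal to an m₁-measurable function and G ∈ K(m₁, m₂). Then for every g ∈ K(m₁, m₂) one has ∫ (Y − g)² dP − ∫ (G − g)² dP = ∫ Y² dP − ∫ G² dP. In particular this difference does not depend on g, so g₀ ∈ K(m₁, m₂) minimizes g ↦ ∫ (Y − g)² dP over K(m₁, m₂) if and only if it minimizes g ↦ ∫ (G − g)² dP over K(m₁, m₂). -/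
open MeasureTheory

/-- `K(m₁, m₂)`: the set of `g ∈ L²(P)` that are a.e. equal to an `m₂`-measurable function
and satisfy `E[g | m₁] = 0` a.e. -/
def memK {Ω : Type*} {𝒢 : MeasurableSpace Ω} (m₁ m₂ : MeasurableSpace Ω)
    (P : Measure[𝒢] Ω) (g : Ω → ℝ) : Prop :=
  MemLp g 2 P ∧ AEStronglyMeasurable[m₂] g P ∧ P[g|m₁] =ᵐ[P] 0


lemma my_int_mul {Ω : Type*} {𝒢 : MeasurableSpace Ω} {P : Measure Ω} {f g : Ω → ℝ}
    (hf : MemLp f 2 P) (hg : MemLp g 2 P) : Integrable (fun ω => f ω * g ω) P := by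
  have h := hg.smul (p := 2) (q := 2) (r := 1) hf
  rw [memLp_one_iff_integrable] at h
  exact h

-- ∫ μ·g = 0 when μ is m₁-a.e.-measurable and E[g|m₁]=0
lemma my_int_zero {Ω : Type*} {𝒢 : MeasurableSpace Ω} (P : Measure Ω) [IsProbabilityMeasure P]
    (m₁ : MeasurableSpace Ω) (h1 : m₁ ≤ 𝒢) {μ g : Ω → ℝ}
    (hμ : MemLp μ 2 P) (hμm : AEStronglyMeasurable[m₁] μ P) (hg : MemLp g 2 P)
    (hg0 : P[g|m₁] =ᵐ[P] 0) : ∫ ω, μ ω * g ω ∂P = 0 := by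
  have hint : Integrable (fun ω => μ ω * g ω) P := my_int_mul hμ hg
  have hpull : P[μ * g|m₁] =ᵐ[P] μ * P[g|m₁] :=
    condExp_mul_of_aestronglyMeasurable_left hμm hint (hg.integrable one_le_two)
  have h0 : P[μ * g|m₁] =ᵐ[P] 0 := by
    refine hpull.trans ?_
    filter_upwards [hg0] with ω hω
    simp [Pi.mul_apply, hω]
  calc ∫ ω, μ ω * g ω ∂P = ∫ ω, (P[μ * g|m₁]) ω ∂P := (integral_condExp h1).symm
    _ = 0 := by rw [integral_congr_ae h0]; simp

-- ∫ g·Y = ∫ g·G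
lemma my_cross {Ω : Type*} {𝒢 : MeasurableSpace Ω} (P : Measure Ω) [IsProbabilityMeasure P]
    (m₁ m₂ : MeasurableSpace Ω) (h12 : m₁ ≤ m₂) (h2 : m₂ ≤ 𝒢)
    {Y μ G g : Ω → ℝ} (hY : MemLp Y 2 P) (hμ : MemLp μ 2 P)
    (hμm : AEStronglyMeasurable[m₁] μ P) (hG : MemLp G 2 P)
    (hYcond : P[Y|m₂] =ᵐ[P] fun ω => μ ω + G ω)
    (hg : MemLp g 2 P) (hgm : AEStronglyMeasurable[m₂] g P) (hg0 : P[g|m₁] =ᵐ[P] 0) :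
    ∫ ω, g ω * Y ω ∂P = ∫ ω, g ω * G ω ∂P := by
  have hgY : Integrable (fun ω => g ω * Y ω) P := my_int_mul hg hY
  have hpull : P[g * Y|m₂] =ᵐ[P] g * P[Y|m₂] :=
    condExp_mul_of_aestronglyMeasurable_left hgm hgY (hY.integrable one_le_two)
  have h1 : ∫ ω, g ω * Y ω ∂P = ∫ ω, g ω * (μ ω + G ω) ∂P := by
    calc ∫ ω, g ω * Y ω ∂P = ∫ ω, (P[g * Y|m₂]) ω ∂P := (integral_condExp h2).symm
      _ = ∫ ω, g ω * (μ ω + G ω) ∂P := by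
          refine integral_congr_ae (hpull.trans ?_)
          filter_upwards [hYcond] with ω hω
          simp [Pi.mul_apply, hω]
  have h2' : ∫ ω, g ω * (μ ω + G ω) ∂P = ∫ ω, g ω * μ ω ∂P + ∫ ω, g ω * G ω ∂P := by
    simp_rw [mul_add]
    exact integral_add (my_int_mul hg hμ) (my_int_mul hg hG)
  have h3 : ∫ ω, g ω * μ ω ∂P = 0 := by
    rw [show (fun ω => g ω * μ ω) = fun ω => μ ω * g ω from funext fun ω => mul_comm _ _]
    exact my_int_zero P m₁ (h12.trans h2) hμ hμm hg hg0
  rw [h1, h2', h3, zero_add]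

-- ∫ (f-g)² = ∫ f² - 2 ∫ fg + ∫ g²
lemma my_expand {Ω : Type*} {𝒢 : MeasurableSpace Ω} (P : Measure Ω) [IsProbabilityMeasure P]
    {f g : Ω → ℝ} (hf : MemLp f 2 P) (hg : MemLp g 2 P) :
    ∫ ω, (f ω - g ω) ^ 2 ∂P =
      (∫ ω, f ω ^ 2 ∂P) - 2 * ∫ ω, f ω * g ω ∂P + ∫ ω, g ω ^ 2 ∂P := by
  have h1 : (fun ω => (f ω - g ω) ^ 2) =
      fun ω => f ω ^ 2 - 2 * (f ω * g ω) + g ω ^ 2 := by funext ω; ring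
  rw [h1, integral_add (by exact (hf.integrable_sq.sub ((my_int_mul hf hg).const_mul 2)))
    hg.integrable_sq, integral_sub hf.integrable_sq ((my_int_mul hf hg).const_mul 2),
    MeasureTheory.integral_const_mul]

/-- If `E[Y|m₂] = μ + G` a.e. with `μ` a.e. `m₁`-measurable and `G ∈ K(m₁, m₂)`, then for every
`g ∈ K(m₁, m₂)`, `∫ (Y - g)² dP - ∫ (G - g)² dP = ∫ Y² dP - ∫ G² dP`; in particular this
difference does not depend on `g`, so `g₀ ∈ K(m₁, m₂)` minimizes `g ↦ ∫ (Y - g)² dP` over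
`K(m₁, m₂)` iff it minimizes `g ↦ ∫ (G - g)² dP` over `K(m₁, m₂)`. -/
theorem squared_error_shift_invariance {Ω : Type*} {𝒢 : MeasurableSpace Ω}
    (P : Measure Ω) [IsProbabilityMeasure P] (m₁ m₂ : MeasurableSpace Ω)
    (h12 : m₁ ≤ m₂) (h2 : m₂ ≤ 𝒢)
    (Y μ G : Ω → ℝ) (hY : MemLp Y 2 P) (hμ : MemLp μ 2 P)
    (hμm : AEStronglyMeasurable[m₁] μ P) (hG : memK m₁ m₂ P G)
    (hYcond : P[Y|m₂] =ᵐ[P] fun ω => μ ω + G ω) :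
    (∀ g : Ω → ℝ, memK m₁ m₂ P g →
      (∫ ω, (Y ω - g ω) ^ 2 ∂P) - ∫ ω, (G ω - g ω) ^ 2 ∂P =
        (∫ ω, Y ω ^ 2 ∂P) - ∫ ω, G ω ^ 2 ∂P) ∧
    (∀ g₀ : Ω → ℝ, memK m₁ m₂ P g₀ →
      ((∀ g : Ω → ℝ, memK m₁ m₂ P g →
          ∫ ω, (Y ω - g₀ ω) ^ 2 ∂P ≤ ∫ ω, (Y ω - g ω) ^ 2 ∂P) ↔
        (∀ g : Ω → ℝ, memK m₁ m₂ P g →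
          ∫ ω, (G ω - g₀ ω) ^ 2 ∂P ≤ ∫ ω, (G ω - g ω) ^ 2 ∂P))) := by
  have key : ∀ g : Ω → ℝ, memK m₁ m₂ P g →
      (∫ ω, (Y ω - g ω) ^ 2 ∂P) - ∫ ω, (G ω - g ω) ^ 2 ∂P =
        (∫ ω, Y ω ^ 2 ∂P) - ∫ ω, G ω ^ 2 ∂P := by
    intro g hg
    obtain ⟨hg2, hgm, hg0⟩ := hg
    have hcross : ∫ ω, g ω * Y ω ∂P = ∫ ω, g ω * G ω ∂P :=
      my_cross P m₁ m₂ h12 h2 hY hμ hμm hG.1 hYcond hg2 hgm hg0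
    have hYg : ∫ ω, Y ω * g ω ∂P = ∫ ω, G ω * g ω ∂P := by
      have e1 : ∀ f : Ω → ℝ, (fun ω => f ω * g ω) = fun ω => g ω * f ω :=
        fun f => funext fun ω => mul_comm _ _
      rw [e1 Y, e1 G]; exact hcross
    rw [my_expand P hY hg2, my_expand P hG.1 hg2, hYg]
    ring
  refine ⟨key, fun g₀ hg₀ => ?_⟩
  constructor
  · intro h g hg
    have k₀ := key g₀ hg₀
    have k := key g hg
    have := h g hg
    linarith
  · intro h g hg
    have k₀ := key g₀ hg₀
    have k := key g hg
    have := h g hg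
    linarith
end

section
/- Let m₁ ≤ m₂ be sub-σ-algebras of 𝒢, R ∈ L²(P), and f := E[R | m₂] − E[R | m₁]. Then for every g ∈ K(m₁, m₂) one has the Pythagorean identity ∫ (R − g)² dP = ∫ (R − f)² dP + ∫ (f − g)² dP. -/
open MeasureTheory

section Aux

variable {α : Type*} {m m0 : MeasurableSpace α} {μ : Measure α}

/-- Product of two `L²` functions is integrable. -/
lemma integrable_mul_of_memℒp_two' {f g : α → ℝ}
    (hf : MemLp f 2 μ) (hg : MemLp g 2 μ) :
    Integrable (fun ω => f ω * g ω) μ := by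
  have h : MemLp (f • g) 1 μ := hg.smul hf
  rw [memLp_one_iff_integrable] at h
  exact h.congr (Filter.Eventually.of_forall fun ω => by simp [smul_eq_mul])

/-- The conditional expectation of an `L²` function is in `L²`. -/
lemma memℒp_two_condexp' [IsFiniteMeasure μ] (hm : m ≤ m0) {f : α → ℝ}
    (hf : MemLp f 2 μ) : MemLp (μ[f|m]) 2 μ := by
  haveI : SigmaFinite (μ.trim hm) := by infer_instance
  set fL : Lp ℝ 2 μ := hf.toLp f with hfL
  have h_eq : (condExpL2 ℝ ℝ hm fL : α → ℝ) =ᵐ[μ] μ[f|m] := by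
    refine ae_eq_condExp_of_forall_setIntegral_eq hm (hf.integrable one_le_two)
      (fun s _ hμs => integrableOn_condExpL2_of_measure_ne_top hm hμs.ne _)
      (fun s hs hμs => ?_) (aestronglyMeasurable_condExpL2 hm _)
    rw [integral_condExpL2_eq hm fL hs hμs.ne]
    exact setIntegral_congr_ae (hm s hs) (hf.coeFn_toLp.mono fun x hx _ => hx)
  exact (Lp.memLp _).ae_eq h_eq

/-- If `ψ` is `m`-measurable in `L²` and `x ∈ L²` with `E[x|m] = 0` a.e., then
`∫ ψ x = 0`. -/
lemma integral_mul_eq_zero_of_condexp_eq_zero' [IsProbabilityMeasure μ] (hm : m ≤ m0)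
    {ψ x : α → ℝ} (hψm : AEStronglyMeasurable[m] ψ μ) (hψ : MemLp ψ 2 μ) (hx : MemLp x 2 μ)
    (hx0 : μ[x|m] =ᵐ[μ] 0) : ∫ ω, ψ ω * x ω ∂μ = 0 := by
  have hint : Integrable (ψ * x) μ := integrable_mul_of_memℒp_two' hψ hx
  have h := condExp_mul_of_aestronglyMeasurable_left hψm hint (hx.integrable one_le_two)
  have h1 : ∫ ω, ψ ω * x ω ∂μ = ∫ ω, (μ[ψ * x|m]) ω ∂μ := (integral_condExp hm).symm
  rw [h1, integral_congr_ae h]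
  have hzero : (ψ * μ[x|m] : α → ℝ) =ᵐ[μ] 0 := by
    filter_upwards [hx0] with ω hω
    simp [Pi.mul_apply, hω]
  rw [integral_congr_ae hzero]
  simp

end Aux

/-- Pythagorean identity: for `R ∈ L²(P)`, `f := E[R|m₂] - E[R|m₁]` and every
`g ∈ K(m₁, m₂)`, `∫ (R - g)² dP = ∫ (R - f)² dP + ∫ (f - g)² dP`. -/
theorem pythagorean_identity_condexp_projection {Ω : Type*} {𝒢 : MeasurableSpace Ω}
    (P : Measure Ω) [IsProbabilityMeasure P] (m₁ m₂ : MeasurableSpace Ω)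
    (h12 : m₁ ≤ m₂) (h2 : m₂ ≤ 𝒢) (R : Ω → ℝ) (hR : MemLp R 2 P) :
    ∀ g : Ω → ℝ, memK m₁ m₂ P g →
      ∫ ω, (R ω - g ω) ^ 2 ∂P =
        (∫ ω, (R ω - ((P[R|m₂]) ω - (P[R|m₁]) ω)) ^ 2 ∂P) +
          ∫ ω, (((P[R|m₂]) ω - (P[R|m₁]) ω) - g ω) ^ 2 ∂P := by
  intro g hg
  obtain ⟨hg2, hgm2, hg0⟩ := hg
  have h1 : m₁ ≤ 𝒢 := h12.trans h2
  have hm2mem : MemLp (P[R|m₂]) 2 P := memℒp_two_condexp' h2 hR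
  have hm1mem : MemLp (P[R|m₁]) 2 P := memℒp_two_condexp' h1 hR
  set F : Ω → ℝ := fun ω => (P[R|m₂]) ω - (P[R|m₁]) ω with hFdef
  have hF : MemLp F 2 P := hm2mem.sub hm1mem
  have hFm : StronglyMeasurable[m₂] F :=
    stronglyMeasurable_condExp.sub (stronglyMeasurable_condExp.mono h12)
  -- F - g data
  have hFg : MemLp (fun ω => F ω - g ω) 2 P := hF.sub hg2
  have hFgm : AEStronglyMeasurable[m₂] (fun ω => F ω - g ω) P :=
    AEStronglyMeasurable.sub hFm.aestronglyMeasurable hgm2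
  -- R - F data
  have hRF : MemLp (fun ω => R ω - F ω) 2 P := hR.sub hF
  -- cross term 1 : ∫ (F - g)(R - E[R|m₂]) = 0
  have hsub2 : P[(fun ω => R ω - (P[R|m₂]) ω)|m₂] =ᵐ[P] 0 := by
    have h := condExp_sub (m := m₂) (f := R) (g := P[R|m₂]) (hR.integrable one_le_two) integrable_condExp
    refine h.trans ?_
    have heq : P[P[R|m₂]|m₂] =ᵐ[P] P[R|m₂] := condExp_condExp_of_le le_rfl h2
    filter_upwards [heq] with ω hω
    simp [Pi.sub_apply, hω]
  have cross1 : ∫ ω, (F ω - g ω) * (R ω - (P[R|m₂]) ω) ∂P = 0 :=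
    integral_mul_eq_zero_of_condexp_eq_zero' h2 hFgm hFg (hR.sub hm2mem) hsub2
  -- cross term 2 : ∫ E[R|m₁](F - g) = 0
  have hsub1 : P[(fun ω => F ω - g ω)|m₁] =ᵐ[P] 0 := by
    have h := condExp_sub (m := m₁) (f := F) (g := g) (hF.integrable one_le_two) (hg2.integrable one_le_two)
    refine h.trans ?_
    have hFc : P[F|m₁] =ᵐ[P] 0 := by
      have h' := condExp_sub (m := m₁) (f := P[R|m₂]) (g := P[R|m₁])
        (integrable_condExp (f := R) (m := m₂)) (integrable_condExp (f := R) (m := m₁))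
      refine h'.trans ?_
      have e1 : P[P[R|m₂]|m₁] =ᵐ[P] P[R|m₁] := condExp_condExp_of_le h12 h2
      have e2 : P[P[R|m₁]|m₁] =ᵐ[P] P[R|m₁] := condExp_condExp_of_le le_rfl h1
      filter_upwards [e1, e2] with ω h1ω h2ω
      simp [Pi.sub_apply, h1ω, h2ω]
    filter_upwards [hFc, hg0] with ω h1ω h2ω
    simp [Pi.sub_apply, h1ω, h2ω]
  have cross2 : ∫ ω, (P[R|m₁]) ω * (F ω - g ω) ∂P = 0 :=
    integral_mul_eq_zero_of_condexp_eq_zero' h1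
      stronglyMeasurable_condExp.aestronglyMeasurable hm1mem hFg hsub1
  -- total cross term
  have intc1 : Integrable (fun ω => (F ω - g ω) * (R ω - (P[R|m₂]) ω)) P :=
    integrable_mul_of_memℒp_two' hFg (hR.sub hm2mem)
  have intc2 : Integrable (fun ω => (P[R|m₁]) ω * (F ω - g ω)) P :=
    integrable_mul_of_memℒp_two' hm1mem hFg
  have crosskey : ∫ ω, (R ω - F ω) * (F ω - g ω) ∂P = 0 := by
    have hfun : (fun ω => (R ω - F ω) * (F ω - g ω)) =
        fun ω => (F ω - g ω) * (R ω - (P[R|m₂]) ω) + (P[R|m₁]) ω * (F ω - g ω) := by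
      funext ω
      simp only [hFdef]
      ring
    rw [hfun, integral_add intc1 intc2, cross1, cross2, add_zero]
  -- integrability of squares
  have intA : Integrable (fun ω => (R ω - F ω) ^ 2) P := by
    have := integrable_mul_of_memℒp_two' hRF hRF
    exact this.congr (Filter.Eventually.of_forall fun ω => by ring)
  have intB : Integrable (fun ω => (F ω - g ω) ^ 2) P := by
    have := integrable_mul_of_memℒp_two' hFg hFg
    exact this.congr (Filter.Eventually.of_forall fun ω => by ring)
  have intC : Integrable (fun ω => (R ω - F ω) * (F ω - g ω)) P :=
    integrable_mul_of_memℒp_two' hRF hFg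
  -- final assembly
  have hfun : (fun ω => (R ω - g ω) ^ 2) =
      fun ω => ((R ω - F ω) ^ 2 + (F ω - g ω) ^ 2) + 2 * ((R ω - F ω) * (F ω - g ω)) := by
    funext ω; ring
  calc ∫ ω, (R ω - g ω) ^ 2 ∂P
      = ∫ ω, ((R ω - F ω) ^ 2 + (F ω - g ω) ^ 2) + 2 * ((R ω - F ω) * (F ω - g ω)) ∂P := by
        rw [hfun]
    _ = (∫ ω, ((R ω - F ω) ^ 2 + (F ω - g ω) ^ 2) ∂P)
          + ∫ ω, 2 * ((R ω - F ω) * (F ω - g ω)) ∂P :=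
        integral_add (intA.add intB) (intC.const_mul 2)
    _ = ((∫ ω, (R ω - F ω) ^ 2 ∂P) + ∫ ω, (F ω - g ω) ^ 2 ∂P)
          + 2 * ∫ ω, (R ω - F ω) * (F ω - g ω) ∂P :=
        congrArg₂ (· + ·) (integral_add intA intB) (integral_const_mul 2 _)
    _ = (∫ ω, (R ω - F ω) ^ 2 ∂P) + ∫ ω, (F ω - g ω) ^ 2 ∂P := by
        rw [crosskey, mul_zero, add_zero]
end

section
/- (Theorem 1, single-coordinate form.) Let m₁ ≤ m₂ be sub-σ-algebras of 𝒢, R ∈ L²(P), and λ ≥ 0. Let f := E[R | m₂] − E[R | m₁] and g* := S_λ(f) = (1 − λ/‖f‖₂)₊ · f. Then g* ∈ K(m₁, m₂), and for every g ∈ K(m₁, m₂) one has ‖R − g*‖₂² + 2λ‖g*‖₂ ≤ ‖R − g‖₂² + 2λ‖g‖₂; moreover any minimizer of g ↦ ‖R − g‖₂² + 2λ‖g‖₂ over K(m₁, m₂) equals g* a.e. -/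
open MeasureTheory
open scoped RealInnerProductSpace

/-- The `L²(P)` norm of a real-valued function. -/
noncomputable def l2norm {Ω : Type*} {𝒢 : MeasurableSpace Ω} (P : Measure[𝒢] Ω)
    (h : Ω → ℝ) : ℝ :=
  (eLpNorm h 2 P).toReal

/-- The conditional expectation of an `L²` function is in `L²`. -/
lemma memℒp_two_condexp'_s10 {Ω : Type*} {m 𝒢 : MeasurableSpace Ω} {P : Measure Ω}
    [IsProbabilityMeasure P] (hm : m ≤ 𝒢)
    {R : Ω → ℝ} (hR : MemLp R 2 P) : MemLp (P[R|m]) 2 P := by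
  have hint : Integrable R P := hR.integrable one_le_two
  set F : Lp ℝ 2 P := hR.toLp R with hF
  set G : Lp ℝ 2 P := ↑(condExpL2 ℝ ℝ hm F) with hG
  have hGmem : MemLp (G : Ω → ℝ) 2 P := Lp.memLp G
  have key : (G : Ω → ℝ) =ᵐ[P] P[R|m] := by
    refine ae_eq_condExp_of_forall_setIntegral_eq hm hint (fun s _ _ => ?_)
      (fun s hs hμs => ?_) ?_
    · exact (hGmem.integrable one_le_two).integrableOn
    · rw [hG, integral_condExpL2_eq hm F hs hμs.ne]
      exact setIntegral_congr_ae (hm s hs) ((hR.coeFn_toLp).mono fun x hx _ => hx)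
    · exact aestronglyMeasurable_condExpL2 hm F
  exact hGmem.ae_eq key

/-- Product of two `L²` functions is integrable. -/
lemma integrable_mul_of_memℒp_two'_s10 {Ω : Type*} {𝒢 : MeasurableSpace Ω} {P : Measure Ω}
    {u v : Ω → ℝ} (hu : MemLp u 2 P) (hv : MemLp v 2 P) :
    Integrable (fun ω => u ω * v ω) P := by
  have h := L2.integrable_inner (𝕜 := ℝ) (hu.toLp u) (hv.toLp v)
  refine h.congr ?_
  filter_upwards [hu.coeFn_toLp, hv.coeFn_toLp] with ω h1 h2
  simp [h1, h2, RCLike.inner_apply, starRingEnd_apply]; ring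

/-- Orthogonality: `R - (E[R|m₂] - E[R|m₁])` is orthogonal to every element of `K(m₁,m₂)`. -/
lemma integral_sub_condexp_mul' {Ω : Type*} {m₁ m₂ 𝒢 : MeasurableSpace Ω} {P : Measure Ω}
    [IsProbabilityMeasure P] (h12 : m₁ ≤ m₂) (h2 : m₂ ≤ 𝒢)
    {R g : Ω → ℝ} (hR : MemLp R 2 P) (hg : memK m₁ m₂ P g) :
    ∫ ω, (R ω - ((P[R|m₂]) ω - (P[R|m₁]) ω)) * g ω ∂P = 0 := by
  have h1 : m₁ ≤ 𝒢 := h12.trans h2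
  have hgL2 : MemLp g 2 P := hg.1
  have hgint : Integrable g P := hgL2.integrable one_le_two
  have hRint : Integrable R P := hR.integrable one_le_two
  have hm2R : MemLp (P[R|m₂]) 2 P := memℒp_two_condexp'_s10 h2 hR
  have hm1R : MemLp (P[R|m₁]) 2 P := memℒp_two_condexp'_s10 h1 hR
  have hgR : Integrable (fun ω => g ω * R ω) P := integrable_mul_of_memℒp_two'_s10 hgL2 hR
  have hgm2 : Integrable (fun ω => g ω * (P[R|m₂]) ω) P := integrable_mul_of_memℒp_two'_s10 hgL2 hm2R
  have hm1g : Integrable (fun ω => (P[R|m₁]) ω * g ω) P := integrable_mul_of_memℒp_two'_s10 hm1R hgL2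
  have piece1 : ∫ ω, g ω * R ω ∂P = ∫ ω, g ω * (P[R|m₂]) ω ∂P := by
    have pull : P[g * R|m₂] =ᵐ[P] g * P[R|m₂] :=
      condExp_mul_of_aestronglyMeasurable_left hg.2.1 hgR hRint
    calc ∫ ω, g ω * R ω ∂P = ∫ ω, (P[g * R|m₂]) ω ∂P := (integral_condExp h2).symm
      _ = ∫ ω, (g * P[R|m₂]) ω ∂P := integral_congr_ae pull
  have piece2 : ∫ ω, (P[R|m₁]) ω * g ω ∂P = 0 := by
    have pull : P[P[R|m₁] * g|m₁] =ᵐ[P] P[R|m₁] * P[g|m₁] :=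
      condExp_mul_of_aestronglyMeasurable_left
        (stronglyMeasurable_condExp.aestronglyMeasurable) hm1g hgint
    have z : P[P[R|m₁] * g|m₁] =ᵐ[P] 0 := by
      refine pull.trans ?_
      filter_upwards [hg.2.2] with ω hω
      simp only [Pi.mul_apply, Pi.zero_apply] at *
      rw [hω, mul_zero]
    calc ∫ ω, (P[R|m₁]) ω * g ω ∂P = ∫ ω, (P[P[R|m₁] * g|m₁]) ω ∂P := (integral_condExp h1).symm
      _ = 0 := by rw [integral_congr_ae z]; simp
  have expand : (fun ω => (R ω - ((P[R|m₂]) ω - (P[R|m₁]) ω)) * g ω)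
      = fun ω => (g ω * R ω - g ω * (P[R|m₂]) ω) + (P[R|m₁]) ω * g ω :=
    funext fun ω => by ring
  have hsub : Integrable (fun ω => g ω * R ω - g ω * (P[R|m₂]) ω) P := hgR.sub hgm2
  rw [expand]
  rw [integral_add hsub hm1g, integral_sub hgR hgm2, piece1, piece2]
  ring

private lemma core_ineq' (F t lam i : ℝ) (hF : 0 ≤ F) (ht : 0 ≤ t) (hlam : 0 ≤ lam)
    (hi : i ≤ F * t) :
    ((1 - max (1 - lam / F) 0) * F) ^ 2 + 2 * lam * (max (1 - lam / F) 0 * F) ≤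
      F ^ 2 - 2 * i + t ^ 2 + 2 * lam * t := by
  rcases eq_or_lt_of_le hF with h0 | hFpos
  · rw [← h0] at hi ⊢
    nlinarith [hi, ht, hlam, sq_nonneg t]
  · have hF0 : F ≠ 0 := ne_of_gt hFpos
    rcases le_or_gt (1 - lam / F) 0 with hcc | hcc
    · rw [max_eq_right hcc]
      have h1 : (1:ℝ) ≤ lam / F := by linarith
      have hlamF : F ≤ lam := by
        calc F = 1 * F := (one_mul F).symm
          _ ≤ (lam / F) * F := by nlinarith
          _ = lam := by field_simp
      nlinarith [mul_nonneg (sub_nonneg.mpr hlamF) ht, sq_nonneg t]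
    · rw [max_eq_left hcc.le]
      have h1 : (1 - lam / F) * F = F - lam := by field_simp
      have h2 : (1 - (1 - lam / F)) * F = lam := by field_simp; ring
      rw [h1, h2]
      nlinarith [sq_nonneg (t - (F - lam))]

private lemma core_eq' (F t lam i : ℝ) (hF : 0 ≤ F) (ht : 0 ≤ t) (hlam : 0 ≤ lam)
    (hi : i ≤ F * t)
    (heq : F ^ 2 - 2 * i + t ^ 2 + 2 * lam * t
      = ((1 - max (1 - lam / F) 0) * F) ^ 2 + 2 * lam * (max (1 - lam / F) 0 * F)) :
    t = max (1 - lam / F) 0 * F ∧ i = F * t := by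
  rcases eq_or_lt_of_le hF with h0 | hFpos
  · rw [← h0] at hi heq ⊢
    have ht0 : t = 0 := by nlinarith [hi, ht, hlam]
    constructor
    · rw [ht0]; ring
    · rw [ht0]; nlinarith [hi, heq]
  · have hF0 : F ≠ 0 := ne_of_gt hFpos
    rcases le_or_gt (1 - lam / F) 0 with hcc | hcc
    · rw [max_eq_right hcc] at heq ⊢
      have h1 : (1:ℝ) ≤ lam / F := by linarith
      have hlamF : F ≤ lam := by
        calc F = 1 * F := (one_mul F).symm
          _ ≤ (lam / F) * F := by nlinarith
          _ = lam := by field_simp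
      have ht0 : t = 0 := by
        nlinarith [mul_nonneg (sub_nonneg.mpr hlamF) ht, sq_nonneg t, hi]
      constructor
      · rw [ht0]; ring
      · rw [ht0] at heq ⊢; nlinarith [heq]
    · rw [max_eq_left hcc.le] at heq ⊢
      have h1 : (1 - lam / F) * F = F - lam := by field_simp
      have h2 : (1 - (1 - lam / F)) * F = lam := by field_simp; ring
      rw [h1, h2] at heq
      rw [h1]
      have htt : t = F - lam := by nlinarith [sq_nonneg (t - (F - lam)), hi]
      constructor
      · exact htt
      · rw [htt] at heq ⊢; nlinarith [heq]

/-- Theorem 1 (single-coordinate form): with `f := E[R|m₂] - E[R|m₁]` and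
`g* := S_λ(f) = (1 - λ/‖f‖₂)₊ · f`, the function `g*` belongs to `K(m₁, m₂)` and minimizes
`g ↦ ‖R - g‖₂² + 2λ‖g‖₂` over `K(m₁, m₂)`; moreover any minimizer over `K(m₁, m₂)` equals
`g*` a.e. -/
theorem soft_thresholded_projection_minimizes {Ω : Type*} {𝒢 : MeasurableSpace Ω}
    (P : Measure Ω) [IsProbabilityMeasure P] (m₁ m₂ : MeasurableSpace Ω)
    (h12 : m₁ ≤ m₂) (h2 : m₂ ≤ 𝒢) (R : Ω → ℝ) (hR : MemLp R 2 P)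
    (lam : ℝ) (hlam : 0 ≤ lam) :
    let f : Ω → ℝ := fun ω => (P[R|m₂]) ω - (P[R|m₁]) ω
    let gStar : Ω → ℝ := fun ω => max (1 - lam / l2norm P f) 0 * f ω
    memK m₁ m₂ P gStar ∧
      (∀ g : Ω → ℝ, memK m₁ m₂ P g →
        l2norm P (fun ω => R ω - gStar ω) ^ 2 + 2 * lam * l2norm P gStar ≤
          l2norm P (fun ω => R ω - g ω) ^ 2 + 2 * lam * l2norm P g) ∧
      ∀ g₀ : Ω → ℝ, memK m₁ m₂ P g₀ →
        (∀ g : Ω → ℝ, memK m₁ m₂ P g →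
          l2norm P (fun ω => R ω - g₀ ω) ^ 2 + 2 * lam * l2norm P g₀ ≤
            l2norm P (fun ω => R ω - g ω) ^ 2 + 2 * lam * l2norm P g) →
        g₀ =ᵐ[P] gStar := by
  intro f gStar
  letI : MeasurableSpace Ω := 𝒢
  have h1 : m₁ ≤ 𝒢 := h12.trans h2
  have hm2R : MemLp (P[R|m₂]) 2 P := memℒp_two_condexp'_s10 h2 hR
  have hm1R : MemLp (P[R|m₁]) 2 P := memℒp_two_condexp'_s10 h1 hR
  have hf : MemLp f 2 P := hm2R.sub hm1R
  have hfmeas : AEStronglyMeasurable[m₂] f P :=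
    AEStronglyMeasurable.sub stronglyMeasurable_condExp.aestronglyMeasurable
      ((stronglyMeasurable_condExp.mono h12).aestronglyMeasurable)
  have hfcond : P[f|m₁] =ᵐ[P] 0 := by
    have e2 : P[P[R|m₁]|m₁] = P[R|m₁] :=
      condExp_of_stronglyMeasurable h1 stronglyMeasurable_condExp integrable_condExp
    have e0 : P[f|m₁] =ᵐ[P] P[P[R|m₂]|m₁] - P[P[R|m₁]|m₁] :=
      condExp_sub (f := P[R|m₂]) (g := P[R|m₁]) integrable_condExp integrable_condExp m₁
    have e1 : P[P[R|m₂]|m₁] =ᵐ[P] P[R|m₁] := condExp_condExp_of_le h12 h2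
    filter_upwards [e0, e1] with ω h0 hone
    simp only [Pi.sub_apply, Pi.zero_apply] at *
    rw [h0, hone, e2, sub_self]
  have hfK : memK m₁ m₂ P f := ⟨hf, hfmeas, hfcond⟩
  set c : ℝ := max (1 - lam / l2norm P f) 0 with hc
  have hc0 : 0 ≤ c := le_max_right _ _
  have hFnn : 0 ≤ l2norm P f := ENNReal.toReal_nonneg
  have hFdivnn : 0 ≤ lam / l2norm P f := div_nonneg hlam hFnn
  have hc1 : c ≤ 1 := max_le (by linarith) zero_le_one
  have hgseq : gStar = c • f := funext fun ω => rfl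
  have hgs : MemLp gStar 2 P := by rw [hgseq]; exact hf.const_smul c
  have hgsmeas : AEStronglyMeasurable[m₂] gStar P := by rw [hgseq]; exact hfmeas.const_smul c
  have hgscond : P[gStar|m₁] =ᵐ[P] 0 := by
    rw [hgseq]
    refine (condExp_smul c f m₁).trans ?_
    filter_upwards [hfcond] with ω hω
    simp only [Pi.smul_apply, Pi.zero_apply] at *
    rw [hω, smul_zero]
  have hgsK : memK m₁ m₂ P gStar := ⟨hgs, hgsmeas, hgscond⟩
  -- Lp-level facts
  have l2norm_toLp : ∀ (A : Ω → ℝ) (hA : MemLp A 2 P), l2norm P A = ‖hA.toLp A‖ :=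
    fun A hA => (Lp.norm_toLp A hA).symm
  have hFnorm : l2norm P f = ‖hf.toLp f‖ := l2norm_toLp f hf
  have hnorm_sub : ∀ (A B : Ω → ℝ) (hA : MemLp A 2 P) (hB : MemLp B 2 P),
      l2norm P (fun ω => A ω - B ω) = ‖hA.toLp A - hB.toLp B‖ := by
    intro A B hA hB
    rw [← MemLp.toLp_sub hA hB, Lp.norm_toLp]
    rfl
  have hinner : ∀ (g : Ω → ℝ) (hg : memK m₁ m₂ P g),
      ⟪hR.toLp R - hf.toLp f, hg.1.toLp g⟫ = 0 := by
    intro g hg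
    have hae : (fun a => ⟪(hR.toLp R - hf.toLp f : Lp ℝ 2 P) a, (hg.1.toLp g : Lp ℝ 2 P) a⟫)
        =ᵐ[P] fun ω => (R ω - f ω) * g ω := by
      filter_upwards [Lp.coeFn_sub (hR.toLp R) (hf.toLp f), hR.coeFn_toLp, hf.coeFn_toLp,
        hg.1.coeFn_toLp] with ω e1 e2 e3 e4
      simp only [Pi.sub_apply] at *
      rw [e1, e2, e3, e4]
      simp [RCLike.inner_apply, starRingEnd_apply]; ring
    rw [L2.inner_def, integral_congr_ae hae]
    exact integral_sub_condexp_mul' h12 h2 hR hg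
  have hoF : ⟪hR.toLp R - hf.toLp f, hf.toLp f⟫ = 0 := hinner f hfK
  have hexpand : ∀ G : Lp ℝ 2 P, ⟪hR.toLp R - hf.toLp f, G⟫ = 0 →
      ‖hR.toLp R - G‖ ^ 2 = ‖hR.toLp R - hf.toLp f‖ ^ 2 + ‖hf.toLp f - G‖ ^ 2 := by
    intro G hG
    have h : hR.toLp R - G = (hR.toLp R - hf.toLp f) + (hf.toLp f - G) := by abel
    rw [h, norm_add_sq_real, inner_sub_right, hG, hoF]
    ring
  have hGsL : hgs.toLp gStar = c • hf.toLp f :=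
    (MemLp.toLp_congr hgs (hf.const_smul c) (by rw [hgseq])).trans
      (MemLp.toLp_const_smul c hf)
  have horthGs : ⟪hR.toLp R - hf.toLp f, c • hf.toLp f⟫ = 0 := by
    rw [real_inner_smul_right, hoF, mul_zero]
  have e3 : ‖hf.toLp f - c • hf.toLp f‖ = (1 - c) * ‖hf.toLp f‖ := by
    rw [show hf.toLp f - c • hf.toLp f = (1 - c) • hf.toLp f by rw [sub_smul, one_smul],
      norm_smul, Real.norm_eq_abs, abs_of_nonneg (by linarith : (0:ℝ) ≤ 1 - c)]
  have master : ∀ (g : Ω → ℝ) (hg : memK m₁ m₂ P g),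
      l2norm P (fun ω => R ω - g ω) ^ 2 + 2 * lam * l2norm P g
        = ‖hR.toLp R - hf.toLp f‖ ^ 2
          + (‖hf.toLp f‖ ^ 2 - 2 * ⟪hf.toLp f, hg.1.toLp g⟫ + ‖hg.1.toLp g‖ ^ 2)
          + 2 * lam * ‖hg.1.toLp g‖ := by
    intro g hg
    rw [hnorm_sub R g hR hg.1, hexpand _ (hinner g hg),
      norm_sub_sq_real (hf.toLp f) (hg.1.toLp g), l2norm_toLp g hg.1]
  have masterStar : l2norm P (fun ω => R ω - gStar ω) ^ 2 + 2 * lam * l2norm P gStar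
      = ‖hR.toLp R - hf.toLp f‖ ^ 2 + ((1 - c) * ‖hf.toLp f‖) ^ 2
          + 2 * lam * (c * ‖hf.toLp f‖) := by
    rw [hnorm_sub R gStar hR hgs, hGsL, hexpand _ horthGs, e3, l2norm_toLp gStar hgs, hGsL,
      norm_smul, Real.norm_eq_abs, abs_of_nonneg hc0]
  have hc' : c = max (1 - lam / ‖hf.toLp f‖) 0 := by rw [hc, hFnorm]
  have main2 : ∀ g : Ω → ℝ, memK m₁ m₂ P g →
      l2norm P (fun ω => R ω - gStar ω) ^ 2 + 2 * lam * l2norm P gStar ≤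
        l2norm P (fun ω => R ω - g ω) ^ 2 + 2 * lam * l2norm P g := by
    intro g hg
    rw [masterStar, master g hg]
    have hcs := real_inner_le_norm (hf.toLp f) (hg.1.toLp g)
    have hkey := core_ineq' ‖hf.toLp f‖ ‖hg.1.toLp g‖ lam ⟪hf.toLp f, hg.1.toLp g⟫
      (norm_nonneg _) (norm_nonneg _) hlam hcs
    rw [← hc'] at hkey
    linarith
  refine ⟨hgsK, main2, ?_⟩
  intro g₀ hg₀ hmin
  have hle1 := hmin gStar hgsK
  have hle2 := main2 g₀ hg₀
  have heq : l2norm P (fun ω => R ω - g₀ ω) ^ 2 + 2 * lam * l2norm P g₀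
      = l2norm P (fun ω => R ω - gStar ω) ^ 2 + 2 * lam * l2norm P gStar :=
    le_antisymm hle1 hle2
  rw [master g₀ hg₀, masterStar] at heq
  have hcs := real_inner_le_norm (hf.toLp f) (hg₀.1.toLp g₀)
  have hcore := core_eq' ‖hf.toLp f‖ ‖hg₀.1.toLp g₀‖ lam ⟪hf.toLp f, hg₀.1.toLp g₀⟫
    (norm_nonneg _) (norm_nonneg _) hlam hcs (by rw [← hc']; linarith)
  obtain ⟨hteq, hieq⟩ := hcore
  rw [← hc'] at hteq
  have hG0 : hg₀.1.toLp g₀ = c • hf.toLp f := by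
    by_cases hF0 : ‖hf.toLp f‖ = 0
    · have hFL0 : hf.toLp f = 0 := norm_eq_zero.mp hF0
      have ht0 : ‖hg₀.1.toLp g₀‖ = 0 := by rw [hteq, hF0, mul_zero]
      rw [norm_eq_zero.mp ht0, hFL0, smul_zero]
    · have hz : ‖(‖hf.toLp f‖) • (hg₀.1.toLp g₀) - (‖hg₀.1.toLp g₀‖) • hf.toLp f‖ ^ 2 = 0 := by
        have hcom : (⟪hg₀.1.toLp g₀, hf.toLp f⟫ : ℝ) = ‖hf.toLp f‖ * ‖hg₀.1.toLp g₀‖ := by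
          rw [real_inner_comm]; exact hieq
        rw [norm_sub_sq_real ((‖hf.toLp f‖) • (hg₀.1.toLp g₀)) ((‖hg₀.1.toLp g₀‖) • hf.toLp f),
          real_inner_smul_left, real_inner_smul_right, norm_smul, norm_smul,
          Real.norm_eq_abs, Real.norm_eq_abs, abs_of_nonneg (norm_nonneg (hf.toLp f)),
          abs_of_nonneg (norm_nonneg (hg₀.1.toLp g₀)), hcom]
        ring
      have hz2 : (‖hf.toLp f‖) • (hg₀.1.toLp g₀) = (‖hg₀.1.toLp g₀‖) • hf.toLp f := by
        have hn0 : ‖(‖hf.toLp f‖) • (hg₀.1.toLp g₀) - (‖hg₀.1.toLp g₀‖) • hf.toLp f‖ = 0 :=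
          pow_eq_zero_iff two_ne_zero |>.mp hz
        exact sub_eq_zero.mp (norm_eq_zero.mp hn0)
      rw [hteq, mul_comm, ← smul_smul] at hz2
      exact smul_right_injective _ hF0 hz2
  have h1' : g₀ =ᵐ[P] ((hg₀.1.toLp g₀ : Lp ℝ 2 P) : Ω → ℝ) := (hg₀.1.coeFn_toLp).symm
  rw [hG0] at h1'
  have h2' : ((c • hf.toLp f : Lp ℝ 2 P) : Ω → ℝ) =ᵐ[P] c • ((hf.toLp f : Lp ℝ 2 P) : Ω → ℝ) :=
    Lp.coeFn_smul c _
  have h3' : ((hf.toLp f : Lp ℝ 2 P) : Ω → ℝ) =ᵐ[P] f := hf.coeFn_toLp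
  filter_upwards [h1', h2', h3'] with ω e1 e2 e3'
  rw [hgseq, e1, e2, Pi.smul_apply, Pi.smul_apply, smul_eq_mul, smul_eq_mul, e3']
end
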